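/- arXiv:math/0201020 — 4 statements merged into one kernel-verified Lean document; each statement's English description precedes it below -/
import Mathlib

section
/- Let G be a compact group acting continuously and linearly on a finite-dimensional real inner product space V with G-invariant inner product, and suppose the action is irreducible (V has no proper nonzero G-invariant subspace). Then for all x, v in V, the integral over G (with respect to the Haar probability measure dg) of ⟨x, g•v⟩² equals ‖v‖²·‖x‖²/dim V. -/
open MeasureTheory

/-- Lemma 2.1: orthogonality relations for matrix elements of a real
irreducible representation of a compact group. -/
theorem stmt_0
    {G : Type*} [Group G] [TopologicalSpace G] [IsTopologicalGroup G]
    [CompactSpace G] [MeasurableSpace G] [BorelSpace G]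
    (μ : Measure G) [μ.IsHaarMeasure] [IsProbabilityMeasure μ]
    {V : Type*} [NormedAddCommGroup V] [InnerProductSpace ℝ V]
    [FiniteDimensional ℝ V]
    (ρ : Representation ℝ G V)
    (hcont : ∀ w : V, Continuous fun g : G => ρ g w)
    (horth : ∀ (g : G) (x y : V), (inner ℝ (ρ g x) (ρ g y) : ℝ) = inner ℝ x y)
    (hirr : ∀ W : Submodule ℝ V, (∀ (g : G), ∀ w ∈ W, ρ g w ∈ W) → W = ⊥ ∨ W = ⊤)
    (x v : V) :
    ∫ g, (inner ℝ x (ρ g v) : ℝ) ^ 2 ∂μ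
      = ‖v‖ ^ 2 * ‖x‖ ^ 2 / (Module.finrank ℝ V) := by
  haveI : CompleteSpace V := FiniteDimensional.complete ℝ V
  rcases subsingleton_or_nontrivial V with hV | hV
  · have hx : x = (0 : V) := Subsingleton.elim _ _
    simp [hx]
  -- integrability
  have hint : ∀ y : V, Integrable (fun g => (inner ℝ y (ρ g v) : ℝ) • (ρ g v)) μ := by
    intro y
    exact (Continuous.smul (Continuous.inner continuous_const (hcont v)) (hcont v)).integrable_of_hasCompactSupport (HasCompactSupport.of_compactSpace _)
  set Af : V → V := fun y => ∫ g, (inner ℝ y (ρ g v) : ℝ) • (ρ g v) ∂μ with hAf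
  have hA_inner : ∀ y z : V, (inner ℝ y (Af z) : ℝ)
      = ∫ g, (inner ℝ z (ρ g v) : ℝ) * (inner ℝ y (ρ g v) : ℝ) ∂μ := by
    intro y z
    calc (inner ℝ y (Af z) : ℝ)
        = ∫ g, (inner ℝ y ((inner ℝ z (ρ g v) : ℝ) • ρ g v) : ℝ) ∂μ :=
          ((innerSL ℝ y).integral_comp_comm (hint z)).symm
      _ = ∫ g, (inner ℝ z (ρ g v) : ℝ) * (inner ℝ y (ρ g v) : ℝ) ∂μ := by
          simp [real_inner_smul_right]
  have hAf_add : ∀ y z : V, Af (y + z) = Af y + Af z := by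
    intro y z
    simp only [hAf, inner_add_left, add_smul]
    exact integral_add (hint y) (hint z)
  have hAf_smul : ∀ (c : ℝ) (y : V), Af (c • y) = c • Af y := by
    intro c y
    simp only [hAf, real_inner_smul_left, ← integral_smul, smul_smul]
  set A : V →ₗ[ℝ] V := { toFun := Af, map_add' := hAf_add, map_smul' := hAf_smul } with hA
  have hAapp : ∀ y : V, A y = Af y := fun _ => rfl
  have hsymm : LinearMap.IsSymmetric A := by
    intro y z
    show (inner ℝ (Af y) z : ℝ) = inner ℝ y (Af z)
    rw [real_inner_comm z (Af y), hA_inner, hA_inner]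
    congr 1; funext g; ring
  have hcomm : ∀ (h : G) (y : V), Af (ρ h y) = ρ h (Af y) := by
    intro h y
    have key : ∀ g : G, (inner ℝ (ρ h y) (ρ (h * g) v) : ℝ) • (ρ (h * g) v)
        = ρ h ((inner ℝ y (ρ g v) : ℝ) • ρ g v) := by
      intro g
      rw [map_mul, Module.End.mul_apply, horth h y (ρ g v), LinearMap.map_smul]
    calc Af (ρ h y) = ∫ g, (inner ℝ (ρ h y) (ρ (h * g) v) : ℝ) • ρ (h * g) v ∂μ :=
          (integral_mul_left_eq_self _ h).symm
      _ = ∫ g, ρ h ((inner ℝ y (ρ g v) : ℝ) • ρ g v) ∂μ := by simp_rw [key]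
      _ = ρ h (Af y) := by
          exact ((ρ h : V →ₗ[ℝ] V).toContinuousLinearMap).integral_comp_comm (hint y)
  -- eigenvalue
  obtain ⟨c, hc⟩ : ∃ c : ℝ, Module.End.HasEigenvalue A c :=
    ⟨_, hsymm.hasEigenvalue_iSup_of_finiteDimensional⟩
  have hinv : ∀ (g : G), ∀ w ∈ Module.End.eigenspace A c, ρ g w ∈ Module.End.eigenspace A c := by
    intro g w hw
    rw [Module.End.mem_eigenspace_iff] at hw ⊢
    rw [hAapp, hcomm, ← hAapp, hw, LinearMap.map_smul]
  have hW : Module.End.eigenspace A c = ⊤ := by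
    rcases hirr (Module.End.eigenspace A c) hinv with h | h
    · exact absurd h hc
    · exact h
  have hAeq : ∀ y : V, Af y = c • y := by
    intro y
    have : y ∈ Module.End.eigenspace A c := hW ▸ Submodule.mem_top
    rw [Module.End.mem_eigenspace_iff] at this
    rw [← hAapp, this]
  -- trace computation
  set n := Module.finrank ℝ V with hn
  have hnpos : 0 < n := Module.finrank_pos
  set b := stdOrthonormalBasis ℝ V with hb
  have hint2 : ∀ y : V, Integrable (fun g => (inner ℝ y (ρ g v) : ℝ) * (inner ℝ y (ρ g v) : ℝ)) μ := by
    intro y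
    have hcy : Continuous fun g : G => (inner ℝ y (ρ g v) : ℝ) :=
      Continuous.inner continuous_const (hcont v)
    exact (hcy.mul hcy).integrable_of_hasCompactSupport (HasCompactSupport.of_compactSpace _)
  have hnorm : ∀ g : G, (inner ℝ (ρ g v) (ρ g v) : ℝ) = ‖v‖ ^ 2 := by
    intro g
    rw [horth, real_inner_self_eq_norm_sq]
  have htrace : c * n = ‖v‖ ^ 2 := by
    have h1 : ∀ i, (inner ℝ (b i) (Af (b i)) : ℝ) = c := by
      intro i
      rw [hAeq, real_inner_smul_right, real_inner_self_eq_norm_sq, b.orthonormal.1 i]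
      simp
    have h2 : ∑ i, (inner ℝ (b i) (Af (b i)) : ℝ) = ‖v‖ ^ 2 := by
      have h3 : ∀ i, (inner ℝ (b i) (Af (b i)) : ℝ)
          = ∫ g, (inner ℝ (b i) (ρ g v) : ℝ) * (inner ℝ (b i) (ρ g v) : ℝ) ∂μ :=
        fun i => hA_inner (b i) (b i)
      simp_rw [h3]
      rw [← integral_finset_sum _ (fun i _ => hint2 (b i))]
      have h4 : ∀ g : G, (∑ i, (inner ℝ (b i) (ρ g v) : ℝ) * (inner ℝ (b i) (ρ g v) : ℝ))
          = ‖v‖ ^ 2 := by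
        intro g
        have := b.sum_inner_mul_inner (ρ g v) (ρ g v)
        rw [← hnorm g, ← this]
        congr 1; ext i
        rw [real_inner_comm (ρ g v) (b i)]
      simp_rw [h4]
      simp
    rw [← h2]
    simp [h1, mul_comm]
    exact Or.inl hn
  have hfinal : (inner ℝ x (Af x) : ℝ) = c * ‖x‖ ^ 2 := by
    rw [hAeq, real_inner_smul_right, real_inner_self_eq_norm_sq]
  have hc_val : c = ‖v‖ ^ 2 / n := by
    have hn0 : (n : ℝ) ≠ 0 := by exact_mod_cast hnpos.ne'
    field_simp
    linarith [htrace]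
  have := hA_inner x x
  rw [hfinal] at this
  have heq : ∫ g, (inner ℝ x (ρ g v) : ℝ) ^ 2 ∂μ
      = ∫ g, (inner ℝ x (ρ g v) : ℝ) * (inner ℝ x (ρ g v) : ℝ) ∂μ := by
    congr 1; ext g; ring
  rw [heq, ← this, hc_val]
  field_simp
end

section
/- Let G be a finite group acting linearly on a finite-dimensional real inner product space V by orthogonal transformations, with the action irreducible. Then for all x, v in V, (1/|G|)·∑_{g∈G} ⟨x, g•v⟩² = ‖v‖²·‖x‖²/dim V. -/
/-- Finite-group version of the orthogonality relation for matrix elements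
of a real irreducible orthogonal representation. -/
theorem stmt_1
    {G : Type*} [Group G] [Fintype G]
    {V : Type*} [NormedAddCommGroup V] [InnerProductSpace ℝ V]
    [FiniteDimensional ℝ V]
    (ρ : Representation ℝ G V)
    (horth : ∀ (g : G) (x y : V), (inner ℝ (ρ g x) (ρ g y) : ℝ) = inner ℝ x y)
    (hirr : ∀ W : Submodule ℝ V, (∀ (g : G), ∀ w ∈ W, ρ g w ∈ W) → W = ⊥ ∨ W = ⊤)
    (x v : V) :
    (Fintype.card G : ℝ)⁻¹ * ∑ g : G, (inner ℝ x (ρ g v) : ℝ) ^ 2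
      = ‖v‖ ^ 2 * ‖x‖ ^ 2 / (Module.finrank ℝ V) := by
  rcases subsingleton_or_nontrivial V with hV | hV
  · have hx : x = 0 := Subsingleton.elim _ _
    simp [hx]
  -- the averaged operator
  set A : V →ₗ[ℝ] V :=
    { toFun := fun w => ∑ g : G, (inner ℝ w (ρ g v) : ℝ) • ρ g v
      map_add' := by
        intro a b
        simp [inner_add_left, add_smul, Finset.sum_add_distrib]
      map_smul' := by
        intro c a
        simp [inner_smul_left, smul_smul, Finset.smul_sum] } with hAdef
  have hAapp : ∀ w : V, A w = ∑ g : G, (inner ℝ w (ρ g v) : ℝ) • ρ g v := fun w => rfl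
  -- A is symmetric
  have hsym : A.IsSymmetric := by
    intro a b
    rw [hAapp, hAapp, sum_inner, inner_sum]
    refine Finset.sum_congr rfl fun g _ => ?_
    rw [real_inner_smul_left, real_inner_smul_right]
    rw [real_inner_comm (ρ g v) b]
    ring
  -- A commutes with the action
  have hcomm : ∀ (h : G) (w : V), A (ρ h w) = ρ h (A w) := by
    intro h w
    rw [hAapp, hAapp, map_sum]
    refine (Fintype.sum_equiv (Equiv.mulLeft h) _ _ fun g => ?_).symm
    simp only [Equiv.coe_mulLeft, map_mul, Module.End.mul_apply, map_smul]
    rw [horth h w (ρ g v)]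
  -- pick an eigenvalue
  obtain ⟨μ, hμ⟩ : ∃ μ : ℝ, Module.End.HasEigenvalue A μ :=
    ⟨_, hsym.hasEigenvalue_iSup_of_finiteDimensional⟩
  -- the eigenspace is invariant, hence everything
  have hinv : ∀ (g : G), ∀ w ∈ Module.End.eigenspace A μ,
      ρ g w ∈ Module.End.eigenspace A μ := by
    intro g w hw
    rw [Module.End.mem_eigenspace_iff] at hw ⊢
    rw [hcomm, hw, map_smul]
  have htop : Module.End.eigenspace A μ = ⊤ := by
    rcases hirr _ hinv with hbot | htop
    · exact absurd hbot hμ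
    · exact htop
  have hAeq : ∀ w : V, A w = μ • w := by
    intro w
    have : w ∈ Module.End.eigenspace A μ := htop ▸ Submodule.mem_top
    exact Module.End.mem_eigenspace_iff.mp this
  -- trace computation via an orthonormal basis
  have hdim : 0 < Module.finrank ℝ V := Module.finrank_pos
  set n := Module.finrank ℝ V with hn
  let b : OrthonormalBasis (Fin n) ℝ V := stdOrthonormalBasis ℝ V
  have hnormgv : ∀ g : G, (inner ℝ (ρ g v) (ρ g v) : ℝ) = ‖v‖ ^ 2 := by
    intro g
    rw [horth, real_inner_self_eq_norm_sq]
  have htrace : μ * n = (Fintype.card G : ℝ) * ‖v‖ ^ 2 := by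
    have h1 : ∑ i : Fin n, (inner ℝ (b i) (A (b i)) : ℝ) = μ * n := by
      simp only [hAeq, real_inner_smul_right, real_inner_self_eq_norm_sq]
      simp [b.orthonormal.1, Finset.mul_sum]
      ring
    have h2 : ∑ i : Fin n, (inner ℝ (b i) (A (b i)) : ℝ)
        = (Fintype.card G : ℝ) * ‖v‖ ^ 2 := by
      have hterm : ∀ i : Fin n, (inner ℝ (b i) (A (b i)) : ℝ)
          = ∑ g : G, (inner ℝ (b i) (ρ g v) : ℝ) * (inner ℝ (b i) (ρ g v) : ℝ) := by
        intro i
        rw [hAapp, inner_sum]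
        simp [real_inner_smul_right, mul_comm]
      calc ∑ i : Fin n, (inner ℝ (b i) (A (b i)) : ℝ)
          = ∑ g : G, ∑ i : Fin n,
              (inner ℝ (b i) (ρ g v) : ℝ) * (inner ℝ (b i) (ρ g v) : ℝ) := by
            rw [Finset.sum_congr rfl fun i _ => hterm i, Finset.sum_comm]
        _ = ∑ _g : G, (‖v‖ : ℝ) ^ 2 := by
            refine Finset.sum_congr rfl fun g _ => ?_
            have hp := b.sum_inner_mul_inner (ρ g v) (ρ g v)
            rw [hnormgv g] at hp
            rw [← hp]
            exact Finset.sum_congr rfl fun i _ => by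
              rw [real_inner_comm (ρ g v) (b i)]
        _ = (Fintype.card G : ℝ) * ‖v‖ ^ 2 := by
            simp [Finset.sum_const, Finset.card_univ, nsmul_eq_mul]
    rw [← h1, h2]
  -- the left-hand side
  have hlhs : ∑ g : G, (inner ℝ x (ρ g v) : ℝ) ^ 2 = μ * ‖x‖ ^ 2 := by
    have : (inner ℝ x (A x) : ℝ) = ∑ g : G, (inner ℝ x (ρ g v) : ℝ) ^ 2 := by
      rw [hAapp, inner_sum]
      simp [real_inner_smul_right, sq, mul_comm]
    rw [← this, hAeq, real_inner_smul_right, real_inner_self_eq_norm_sq]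
  rw [hlhs]
  have hcard : (0 : ℝ) < Fintype.card G := by positivity
  have hnpos : (0 : ℝ) < n := by exact_mod_cast hdim
  field_simp
  nlinarith [htrace]
end

section
/- Let G be a compact group acting continuously and orthogonally on a finite-dimensional real inner product space V, and fix v ∈ V. Then there exists a decomposition V = V₁ ⊕ ... ⊕ V_k into nonzero pairwise orthogonal G-invariant subspaces such that for every x ∈ V, ∫_G ⟨x, g•v⟩² dg = ∑_{i=1}^k ‖x_i‖²·‖v_i‖²/dim V_i, where x_i and v_i denote the orthogonal projections of x and v onto V_i. -/
open MeasureTheory Module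

set_option linter.unusedSectionVars false

section Aux

variable {G : Type*} [Group G] [TopologicalSpace G] [IsTopologicalGroup G]
    [CompactSpace G] [MeasurableSpace G] [BorelSpace G]
    {V : Type*} [NormedAddCommGroup V] [InnerProductSpace ℝ V] [FiniteDimensional ℝ V]

private lemma contInt (μ : Measure G) [IsFiniteMeasure μ] {E : Type*} [NormedAddCommGroup E]
    {f : G → E} (hf : Continuous f) : Integrable f μ :=
  hf.integrable_of_hasCompactSupport (HasCompactSupport.of_compactSpace f)

/-- The averaged rank-one operator `x ↦ ∫ ⟪x, gv⟫ • gv`. -/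
noncomputable def Tav (μ : Measure G) [IsFiniteMeasure μ] (ρ : Representation ℝ G V) (v : V)
    (hcont : ∀ w : V, Continuous fun g : G => ρ g w) : Module.End ℝ V where
  toFun x := ∫ g, (inner ℝ x (ρ g v) : ℝ) • ρ g v ∂μ
  map_add' x y := by
    rw [← integral_add (contInt μ ((continuous_const.inner (hcont v)).fun_smul (hcont v)))
      (contInt μ ((continuous_const.inner (hcont v)).fun_smul (hcont v)))]
    refine integral_congr_ae (Filter.Eventually.of_forall fun g => ?_)
    simp only [inner_add_left, add_smul]
  map_smul' c x := by
    simp only [RingHom.id_apply]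
    rw [← integral_smul]
    refine integral_congr_ae (Filter.Eventually.of_forall fun g => ?_)
    simp only [real_inner_smul_left, smul_smul]

variable (μ : Measure G) [IsFiniteMeasure μ] (ρ : Representation ℝ G V) (v : V)
    (hcont : ∀ w : V, Continuous fun g : G => ρ g w)

lemma Tav_apply (x : V) : Tav μ ρ v hcont x = ∫ g, (inner ℝ x (ρ g v) : ℝ) • ρ g v ∂μ := rfl

lemma Tav_inner (x y : V) :
    (inner ℝ (Tav μ ρ v hcont x) y : ℝ)
      = ∫ g, (inner ℝ x (ρ g v) : ℝ) * (inner ℝ y (ρ g v) : ℝ) ∂μ := by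
  have hint : Integrable (fun g => (inner ℝ x (ρ g v) : ℝ) • ρ g v) μ :=
    contInt μ ((continuous_const.inner (hcont v)).smul (hcont v))
  rw [← real_inner_comm, Tav_apply, ← integral_inner hint y]
  refine integral_congr_ae (Filter.Eventually.of_forall fun g => ?_)
  simp only [real_inner_smul_right]

lemma Tav_symm : (Tav μ ρ v hcont).IsSymmetric := by
  intro x y
  rw [Tav_inner, real_inner_comm (Tav μ ρ v hcont y) x, Tav_inner]
  refine integral_congr_ae (Filter.Eventually.of_forall fun g => ?_)
  ring


lemma rho_inv_apply (g : G) (w : V) : ρ g (ρ g⁻¹ w) = w := by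
  rw [← Module.End.mul_apply, ← map_mul, mul_inv_cancel, map_one, Module.End.one_apply]

lemma norm_rho (horth : ∀ (g : G) (x y : V), (inner ℝ (ρ g x) (ρ g y) : ℝ) = inner ℝ x y)
    (g : G) (w : V) : ‖ρ g w‖ = ‖w‖ := by
  have h := horth g w w
  rw [real_inner_self_eq_norm_sq, real_inner_self_eq_norm_sq] at h
  nlinarith [norm_nonneg (ρ g w), norm_nonneg w, sq_nonneg (‖ρ g w‖ - ‖w‖)]

lemma Tav_comm [μ.IsMulLeftInvariant]
    (horth : ∀ (g : G) (x y : V), (inner ℝ (ρ g x) (ρ g y) : ℝ) = inner ℝ x y)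
    (h : G) (x : V) :
    Tav μ ρ v hcont (ρ h x) = ρ h (Tav μ ρ v hcont x) := by
  have hint : Integrable (fun g => (inner ℝ x (ρ g v) : ℝ) • ρ g v) μ :=
    contInt μ ((continuous_const.inner (hcont v)).smul (hcont v))
  rw [Tav_apply, Tav_apply,
    ← integral_mul_left_eq_self (μ := μ) (fun g => (inner ℝ (ρ h x) (ρ g v) : ℝ) • ρ g v) h]
  have heq : ∀ g : G, (inner ℝ (ρ h x) (ρ (h * g) v) : ℝ) • ρ (h * g) v
      = (LinearMap.toContinuousLinearMap (ρ h)) ((inner ℝ x (ρ g v) : ℝ) • ρ g v) := by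
    intro g
    rw [map_mul, Module.End.mul_apply, horth h x (ρ g v)]
    simp [_root_.map_smul]
  simp only [heq]
  rw [ContinuousLinearMap.integral_comp_comm _ hint]
  rfl

lemma proj_comm (horth : ∀ (g : G) (x y : V), (inner ℝ (ρ g x) (ρ g y) : ℝ) = inner ℝ x y)
    {W : Submodule ℝ V} (hW : ∀ g, ∀ w ∈ W, ρ g w ∈ W) (g : G) (x : V) :
    (W.orthogonalProjectionOnto (ρ g x) : V) = ρ g (W.orthogonalProjectionOnto x) := by
  apply Submodule.eq_starProjection_of_mem_of_inner_eq_zero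
    (hW g _ (W.orthogonalProjectionOnto x).2)
  intro w hw
  rw [← map_sub]
  have h2 : w = ρ g (ρ g⁻¹ w) := (rho_inv_apply ρ g w).symm
  rw [h2, horth]
  rw [real_inner_comm]
  exact (Submodule.sub_starProjection_mem_orthogonal (K := W) x) _ (hW g⁻¹ w hw)


lemma parseval_proj (W : Submodule ℝ V) (u : V) :
    ∑ j, (inner ℝ ((stdOrthonormalBasis ℝ W) j : V) u : ℝ) ^ 2
      = ‖(W.orthogonalProjectionOnto u : V)‖ ^ 2 := by
  set b := stdOrthonormalBasis ℝ W
  set p := W.orthogonalProjectionOnto u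
  have hstep : ∀ j, (inner ℝ ((b j : V)) u : ℝ) = inner ℝ (b j) p := by
    intro j
    have h0 : (inner ℝ ((b j : V)) (u - (p : V)) : ℝ) = 0 :=
      (Submodule.sub_starProjection_mem_orthogonal (K := W) u) _ (b j).2
    have : u = (p : V) + (u - (p : V)) := by abel
    rw [Submodule.coe_inner]
    calc (inner ℝ ((b j : V)) u : ℝ) = inner ℝ ((b j : V)) ((p : V) + (u - (p : V))) := by rw [← this]
      _ = inner ℝ ((b j : V)) ((p : V)) := by rw [inner_add_right, h0, add_zero]
  simp_rw [hstep]
  have hpar := b.sum_inner_mul_inner p p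
  have : ∀ j, (inner ℝ (b j) p : ℝ) ^ 2 = inner ℝ p (b j) * inner ℝ (b j) p := by
    intro j; rw [sq, real_inner_comm]
  simp_rw [this]
  rw [hpar, real_inner_self_eq_norm_sq]
  simp

end Aux

/-- Lemma 2.2: decomposition of the second moment of a matrix element into
contributions of pairwise orthogonal invariant subspaces. -/
theorem stmt_3
    {G : Type*} [Group G] [TopologicalSpace G] [IsTopologicalGroup G]
    [CompactSpace G] [MeasurableSpace G] [BorelSpace G]
    (μ : Measure G) [μ.IsHaarMeasure] [IsProbabilityMeasure μ]
    {V : Type*} [NormedAddCommGroup V] [InnerProductSpace ℝ V]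
    [FiniteDimensional ℝ V]
    (ρ : Representation ℝ G V)
    (hcont : ∀ w : V, Continuous fun g : G => ρ g w)
    (horth : ∀ (g : G) (x y : V), (inner ℝ (ρ g x) (ρ g y) : ℝ) = inner ℝ x y)
    (v : V) :
    ∃ (k : ℕ) (W : Fin k → Submodule ℝ V),
      (∀ i, W i ≠ ⊥) ∧
      (∀ i j, i ≠ j → ∀ x ∈ W i, ∀ y ∈ W j, (inner ℝ x y : ℝ) = 0) ∧
      (∀ i, ∀ (g : G), ∀ w ∈ W i, ρ g w ∈ W i) ∧
      (⨆ i, W i) = ⊤ ∧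
      ∀ x : V,
        ∫ g, (inner ℝ x (ρ g v) : ℝ) ^ 2 ∂μ
          = ∑ i, ‖(W i).orthogonalProjectionOnto x‖ ^ 2 * ‖(W i).orthogonalProjectionOnto v‖ ^ 2
              / (Module.finrank ℝ (W i)) := by
  classical
  set T : Module.End ℝ V := Tav μ ρ v hcont with hTdef
  have hsym : T.IsSymmetric := Tav_symm μ ρ v hcont
  have hcomm : ∀ (h : G) (x : V), T (ρ h x) = ρ h (T x) := Tav_comm μ ρ v hcont horth
  set ι := Module.End.Eigenvalues T with hι
  set k := Fintype.card ι with hk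
  set e : Fin k ≃ ι := (Fintype.equivFin ι).symm with he
  set W : Fin k → Submodule ℝ V := fun i => Module.End.eigenspace T ((e i : ℝ)) with hWdef
  have hWinv : ∀ i (g : G), ∀ w ∈ W i, ρ g w ∈ W i := by
    intro i g w hw
    rw [hWdef, Module.End.mem_eigenspace_iff] at hw ⊢
    rw [hcomm, hw, _root_.map_smul]
  have hofam : OrthogonalFamily ℝ (fun i : Fin k => W i) (fun i => (W i).subtypeₗᵢ) :=
    hsym.orthogonalFamily_eigenspaces'.comp e.injective
  have hsup : (⨆ i, W i) = ⊤ := by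
    rw [hWdef, Equiv.iSup_comp (g := fun c : ι => Module.End.eigenspace T (c : ℝ)) e]
    exact hsym.direct_sum_isInternal.submodule_iSup_eq_top
  have hbot : ∀ i, W i ≠ ⊥ := fun i => Module.End.hasEigenvalue_iff.mp (e i).prop
  refine ⟨k, W, hbot, ?_, hWinv, hsup, ?_⟩
  · intro i j hij x hx y hy
    exact hofam hij ⟨x, hx⟩ ⟨y, hy⟩
  intro x
  -- basic abbreviations
  have hT_eig : ∀ i (y : V), y ∈ W i → T y = (e i : ℝ) • y := by
    intro i y hy
    exact Module.End.mem_eigenspace_iff.mp hy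
  have hxdec : ∀ y : V, (∑ i, (((W i).orthogonalProjectionOnto y : V))) = y := by
    intro y
    exact hofam.sum_projection_of_mem_iSup y (by rw [hsup]; exact Submodule.mem_top)
  have hLHS : ∫ g, (inner ℝ x (ρ g v) : ℝ) ^ 2 ∂μ = inner ℝ (T x) x := by
    rw [hTdef, Tav_inner μ ρ v hcont x x]
    simp_rw [sq]
  -- key trace identity
  have key : ∀ i, (e i : ℝ) * (Module.finrank ℝ (W i) : ℝ)
      = ‖((W i).orthogonalProjectionOnto v : V)‖ ^ 2 := by
    intro i
    set b := stdOrthonormalBasis ℝ (W i) with hb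
    have h1 : ∀ j, (inner ℝ (T ((b j : V))) ((b j : V)) : ℝ) = (e i : ℝ) := by
      intro j
      rw [hT_eig i _ (b j).2, real_inner_smul_left, real_inner_self_eq_norm_sq]
      have : ‖(b j : V)‖ = 1 := by
        rw [Submodule.norm_coe]; exact b.orthonormal.1 j
      rw [this]; ring
    have h2 : ∀ j, (inner ℝ (T ((b j : V))) ((b j : V)) : ℝ)
        = ∫ g, (inner ℝ ((b j : V)) (ρ g v) : ℝ) ^ 2 ∂μ := by
      intro j
      rw [hTdef, Tav_inner μ ρ v hcont]
      simp_rw [sq]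
    have h4 : ∀ g : G, (∑ j, (inner ℝ ((b j : V)) (ρ g v) : ℝ) ^ 2)
        = ‖((W i).orthogonalProjectionOnto v : V)‖ ^ 2 := by
      intro g
      rw [parseval_proj (W i) (ρ g v), proj_comm ρ horth (hWinv i) g v,
        norm_rho ρ horth]
    have h5 : (∑ j, (inner ℝ (T ((b j : V))) ((b j : V)) : ℝ))
        = ‖((W i).orthogonalProjectionOnto v : V)‖ ^ 2 := by
      simp_rw [h2]
      rw [← integral_finset_sum _
        (fun j _ => contInt μ ((continuous_const.inner (hcont v)).pow 2))]
      simp_rw [h4]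
      simp
    rw [← h5, Finset.sum_congr rfl fun j _ => h1 j]
    simp [Finset.sum_const, mul_comm]
  -- expansion of the quadratic form
  have hTx : T x = ∑ i, (e i : ℝ) • (((W i).orthogonalProjectionOnto x : V)) := by
    conv_lhs => rw [← hxdec x]
    rw [map_sum]
    exact Finset.sum_congr rfl fun i _ => hT_eig i _ ((W i).orthogonalProjectionOnto x).2
  have hinner_px : ∀ i, (inner ℝ (((W i).orthogonalProjectionOnto x : V)) x : ℝ)
      = ‖((W i).orthogonalProjectionOnto x : V)‖ ^ 2 := by
    intro i
    have h0 : (inner ℝ (((W i).orthogonalProjectionOnto x : V))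
        (x - ((W i).orthogonalProjectionOnto x : V)) : ℝ) = 0 :=
      (Submodule.sub_starProjection_mem_orthogonal (K := W i) x) _
        ((W i).orthogonalProjectionOnto x).2
    have hxx : x = ((W i).orthogonalProjectionOnto x : V)
        + (x - ((W i).orthogonalProjectionOnto x : V)) := by abel
    calc (inner ℝ (((W i).orthogonalProjectionOnto x : V)) x : ℝ)
        = inner ℝ (((W i).orthogonalProjectionOnto x : V))
            (((W i).orthogonalProjectionOnto x : V)
              + (x - ((W i).orthogonalProjectionOnto x : V))) := by rw [← hxx]
      _ = ‖((W i).orthogonalProjectionOnto x : V)‖ ^ 2 := by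
          rw [inner_add_right, h0, add_zero, real_inner_self_eq_norm_sq]
  have hquad : (inner ℝ (T x) x : ℝ)
      = ∑ i, (e i : ℝ) * ‖((W i).orthogonalProjectionOnto x : V)‖ ^ 2 := by
    rw [hTx, sum_inner]
    exact Finset.sum_congr rfl fun i _ => by
      rw [real_inner_smul_left, hinner_px i]
  rw [hLHS, hquad]
  refine Finset.sum_congr rfl fun i _ => ?_
  have hd : (0 : ℝ) < (Module.finrank ℝ (W i) : ℝ) := by
    have : Nontrivial (W i) := Submodule.nontrivial_iff_ne_bot.mpr (hbot i)
    exact_mod_cast Module.finrank_pos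
  simp only [← Submodule.norm_coe]
  rw [eq_div_iff (ne_of_gt hd)]
  nlinarith [key i]
end

section
/- Let G be a finite group acting linearly on a finite-dimensional real vector space V, let v ∈ V and let ℓ be a linear functional on V. Define f: G → ℝ by f(g) = ℓ(g•v). Then max_{g∈G} |f(g)| ≤ √(dim V) · ( (1/|G|)·∑_{g∈G} f(g)² )^{1/2}. -/
open scoped RealInnerProductSpace

private lemma normsq_euclid {ι : Type*} [Fintype ι] (w : EuclideanSpace ℝ ι) :
    ‖w‖ ^ 2 = ∑ i, (w i) ^ 2 := by
  exact EuclideanSpace.real_norm_sq_eq w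

/-- Finite-group version of Theorem 1.2. -/
theorem stmt_5
    {G : Type*} [Group G] [Fintype G]
    {V : Type*} [AddCommGroup V] [Module ℝ V] [FiniteDimensional ℝ V]
    (ρ : Representation ℝ G V)
    (ℓ : V →ₗ[ℝ] ℝ) (v : V) :
    (⨆ g : G, |ℓ (ρ g v)|)
      ≤ Real.sqrt (Module.finrank ℝ V)
        * Real.sqrt ((Fintype.card G : ℝ)⁻¹ * ∑ g : G, (ℓ (ρ g v)) ^ 2) := by
  classical
  have hGne : Nonempty G := ⟨1⟩
  let Φ : V →ₗ[ℝ] EuclideanSpace ℝ G :=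
    { toFun := fun x => WithLp.toLp 2 (fun g => ℓ (ρ g x))
      map_add' := fun x y => by ext g; simp
      map_smul' := fun c x => by ext g; simp }
  let U : Submodule ℝ (EuclideanSpace ℝ G) := LinearMap.range Φ
  let P := U.orthogonalProjectionOnto
  let e : G → EuclideanSpace ℝ G := fun g => EuclideanSpace.single g (1:ℝ)
  let f : EuclideanSpace ℝ G := Φ v
  have hfU : f ∈ U := ⟨v, rfl⟩
  -- translation isometries
  let T : G → (EuclideanSpace ℝ G ≃ₗᵢ[ℝ] EuclideanSpace ℝ G) :=
    fun h => LinearIsometryEquiv.piLpCongrLeft 2 ℝ ℝ (Equiv.mulRight h).symm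
  have hT : ∀ h (x : EuclideanSpace ℝ G) g, T h x g = x (g * h) := by
    intro h x g
    simp [T, LinearIsometryEquiv.piLpCongrLeft_apply, Equiv.piCongrLeft']
  have hTΦ : ∀ h x, T h (Φ x) = Φ (ρ h x) := by
    intro h x
    ext g
    rw [hT]
    show ℓ (ρ (g * h) x) = ℓ (ρ g (ρ h x))
    rw [map_mul]; rfl
  have hTU : ∀ h, ∀ u ∈ U, T h u ∈ U := by
    rintro h u ⟨x, rfl⟩; exact ⟨ρ h x, (hTΦ h x).symm⟩
  have hTe : ∀ h k, T h (e k) = e (k * h⁻¹) := by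
    intro h k
    ext g
    rw [hT]
    simp only [e, EuclideanSpace.single_apply]
    congr 1
    simp only [eq_iff_iff]
    constructor
    · rintro rfl; group
    · rintro rfl; group
  -- projection commutes with T
  have hPT : ∀ h x, (P (T h x) : EuclideanSpace ℝ G) = T h (P x) := by
    intro h x
    show ((U.orthogonalProjectionOnto (T h x)) : EuclideanSpace ℝ G) = T h (P x)
    refine (U.eq_starProjection_of_mem_of_inner_eq_zero (u := T h x) (hTU h _ (P x).2) ?_)
    intro w hw
    have h1 : T h x - T h (P x) = T h (x - (P x : EuclideanSpace ℝ G)) := by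
      rw [map_sub]
    have h2 : (T h).symm w ∈ U := by
      have : (T h).symm w = T h⁻¹ w := by
        apply (T h).injective
        rw [(T h).apply_symm_apply]
        ext g
        rw [hT, hT, mul_inv_cancel_right]
      rw [this]; exact hTU h⁻¹ w hw
    rw [h1]
    calc ⟪T h (x - (P x : EuclideanSpace ℝ G)), w⟫
        = ⟪T h (x - (P x : EuclideanSpace ℝ G)), T h ((T h).symm w)⟫ := by
          rw [(T h).apply_symm_apply]
      _ = ⟪x - (P x : EuclideanSpace ℝ G), (T h).symm w⟫ := (T h).inner_map_map _ _
      _ = 0 := by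
          rw [real_inner_comm]
          exact (U.sub_starProjection_mem_orthogonal x) _ h2
  -- norm of projections of basis vectors is constant
  have hconst : ∀ g, ‖(P (e g) : EuclideanSpace ℝ G)‖ = ‖(P (e 1) : EuclideanSpace ℝ G)‖ := by
    intro g
    have : e g = T (g⁻¹) (e 1) := by rw [hTe]; simp
    rw [this, hPT, (T g⁻¹).norm_map]
    -- orthonormal basis of U
  let m := Module.finrank ℝ U
  let b := stdOrthonormalBasis ℝ U
  have hPnorm : ∀ x : EuclideanSpace ℝ G,
      ‖(P x : EuclideanSpace ℝ G)‖ ^ 2 = ∑ i, ⟪(b i : EuclideanSpace ℝ G), x⟫ ^ 2 := by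
    intro x
    rw [show ‖(P x : EuclideanSpace ℝ G)‖ = ‖P x‖ from Submodule.norm_coe _, ← (b.repr).norm_map (P x), normsq_euclid]
    congr 1
    funext i
    rw [b.repr_apply_apply, Submodule.inner_orthogonalProjectionOnto_eq_of_mem_left]
  -- trace computation: sum over g of ‖P (e g)‖² equals m
  have htrace : ∑ g : G, ‖(P (e g) : EuclideanSpace ℝ G)‖ ^ 2 = (m : ℝ) := by
    rw [Finset.sum_congr rfl fun g _ => hPnorm (e g), Finset.sum_comm]
    have : ∀ i, ∑ g : G, ⟪(b i : EuclideanSpace ℝ G), e g⟫ ^ 2 = 1 := by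
      intro i
      have h1 : ∀ g : G, ⟪(b i : EuclideanSpace ℝ G), e g⟫ = (b i : EuclideanSpace ℝ G) g := by
        intro g
        simp [e, EuclideanSpace.inner_single_right]
      rw [Finset.sum_congr rfl fun g _ => by rw [h1 g]]
      rw [← normsq_euclid ((b i : EuclideanSpace ℝ G)), Submodule.norm_coe, b.orthonormal.1 i,
        one_pow]
    rw [Finset.sum_congr rfl fun i _ => this i]
    simp [m]
  -- evaluation formula
  have heval : ∀ g : G, ℓ (ρ g v) = ⟪(P (e g) : EuclideanSpace ℝ G), f⟫ := by
    intro g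
    have h0 : ⟪e g, f⟫ = ℓ (ρ g v) := by
      have : ⟪e g, f⟫ = f g := by simp [e, EuclideanSpace.inner_single_left]
      rw [this]; rfl
    have h1 : ⟪f, e g - (P (e g) : EuclideanSpace ℝ G)⟫ = 0 :=
      (U.sub_starProjection_mem_orthogonal (e g)) f hfU
    rw [inner_sub_right, sub_eq_zero] at h1
    have h2 : ⟪(P (e g) : EuclideanSpace ℝ G), f⟫ = ⟪f, (P (e g) : EuclideanSpace ℝ G)⟫ :=
      real_inner_comm _ _
    have h3 : ⟪f, e g⟫ = ⟪e g, f⟫ := real_inner_comm _ _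
    linarith
  -- the pointwise bound
  set c := ‖(P (e 1) : EuclideanSpace ℝ G)‖ with hc
  have hbound : ∀ g : G, |ℓ (ρ g v)| ≤ c * ‖f‖ := by
    intro g
    rw [heval g]
    calc |⟪(P (e g) : EuclideanSpace ℝ G), f⟫| ≤ ‖(P (e g) : EuclideanSpace ℝ G)‖ * ‖f‖ :=
          abs_real_inner_le_norm _ _
      _ = c * ‖f‖ := by rw [hconst g]
  -- numerics
  set n := (Fintype.card G : ℝ) with hn
  have hnpos : 0 < n := by positivity
  have hcsq : c ^ 2 = m / n := by
    have hsum : ∑ g : G, ‖(P (e g) : EuclideanSpace ℝ G)‖ ^ 2 = n * c ^ 2 := by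
      rw [Finset.sum_congr rfl
        (fun g _ => (by rw [hconst g] :
          ‖(P (e g) : EuclideanSpace ℝ G)‖ ^ 2 = c ^ 2)),
        Finset.sum_const, Finset.card_univ, nsmul_eq_mul, hn]
    have : n * c ^ 2 = (m : ℝ) := by rw [← hsum, htrace]
    field_simp [← this, mul_comm]
    linarith
  set S := ∑ g : G, (ℓ (ρ g v)) ^ 2 with hS
  have hfnorm : ‖f‖ ^ 2 = S := by
    rw [normsq_euclid f, hS]
    rfl
  have hSnonneg : 0 ≤ S := by positivity
  have hmd : (m : ℝ) ≤ (Module.finrank ℝ V : ℝ) := by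
    exact_mod_cast Φ.finrank_range_le
  have hfin : c * ‖f‖ ≤ Real.sqrt (Module.finrank ℝ V) * Real.sqrt (n⁻¹ * S) := by
    have h1 : c * ‖f‖ = Real.sqrt ((m / n) * S) := by
      rw [Real.sqrt_mul (by positivity), ← hcsq, ← hfnorm,
        Real.sqrt_sq (norm_nonneg _), Real.sqrt_sq (norm_nonneg _)]
    rw [h1, ← Real.sqrt_mul (by positivity : (0:ℝ) ≤ (Module.finrank ℝ V : ℝ))]
    apply Real.sqrt_le_sqrt
    rw [div_mul_eq_mul_div, div_eq_inv_mul,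
      show (Module.finrank ℝ V : ℝ) * (n⁻¹ * S) = n⁻¹ * ((Module.finrank ℝ V : ℝ) * S) by ring]
    gcongr
  refine ciSup_le fun g => ?_
  exact (hbound g).trans hfin
end
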